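/- If C and C' are two regular CRNs that share no intermediate species, then C ∪ C' is regular; moreover, every prime formal pathway of C ∪ C' is a prime formal pathway of C alone or of C' alone. -/

import Mathlib

namespace CRNVerif

variable {σ : Type} [DecidableEq σ]

/-- A state is a multiset of species. -/
abbrev State (σ : Type) := Multiset σ
/-- A reaction is a pair (reactants, products) of multisets of species. -/
abbrev Reaction (σ : Type) := Multiset σ × Multiset σ
/-- A pathway is a finite sequence of reactions. -/
abbrev Pathway (σ : Type) := List (Reaction σ)

/-- Result of applying reaction `r` in state `S` (i.e. `S ⊕ r`). -/
def applyRxn (S : State σ) (r : Reaction σ) : State σ := S - r.1 + r.2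

/-- Minimal initial state of a pathway: the smallest state in which
its reactions can occur in succession. -/
def minInit : Pathway σ → State σ
  | [] => 0
  | r :: p => r.1 + (minInit p - r.2)

/-- State reached from `S` after performing all reactions of `p` in order. -/
def finalFrom (S : State σ) : Pathway σ → State σ
  | [] => S
  | r :: p => finalFrom (applyRxn S r) p

/-- The final state of a pathway (starting from its minimal initial state). -/
def finalState (p : Pathway σ) : State σ := finalFrom (minInit p) p

/-- The state `S_i` after the first `i` reactions, starting from the minimal initial state. -/
def stateAt (p : Pathway σ) (i : ℕ) : State σ := finalFrom (minInit p) (p.take i)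

/-- A state is formal if it contains only formal species (as given by `fm`). -/
def FormalState (fm : σ → Bool) (S : State σ) : Prop := ∀ x ∈ S, fm x = true

/-- `Formal(S)`: the multiset obtained by removing all intermediate species from `S`. -/
def formalPart (fm : σ → Bool) (S : State σ) : State σ := S.filter (fun x => fm x = true)

/-- A reaction is trivial if reactants equal products. -/
def TrivialRxn (r : Reaction σ) : Prop := r.1 = r.2

/-- A CRN is a (finite) set of nontrivial reactions. -/
def NontrivialRxns (C : Finset (Reaction σ)) : Prop := ∀ r ∈ C, ¬ TrivialRxn r

/-- A formal CRN contains only formal reactions. -/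
def IsFormalCRN (fm : σ → Bool) (C : Finset (Reaction σ)) : Prop :=
  ∀ r ∈ C, FormalState fm r.1 ∧ FormalState fm r.2

/-- `p` is a pathway of the CRN `C`. -/
def PathwayOf (C : Finset (Reaction σ)) (p : Pathway σ) : Prop := ∀ r ∈ p, r ∈ C

/-- `Interleave l₁ l₂ l`: `l` can be partitioned into the two (order-preserving,
not necessarily contiguous) subsequences `l₁` and `l₂`. -/
inductive Interleave {α : Type u} : List α → List α → List α → Prop
  | nil : Interleave [] [] []
  | left {a : α} {l₁ l₂ l : List α} : Interleave l₁ l₂ l → Interleave (a :: l₁) l₂ (a :: l)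
  | right {a : α} {l₁ l₂ l : List α} : Interleave l₁ l₂ l → Interleave l₁ (a :: l₂) (a :: l)

/-- `InterleaveMany qs p`: `p` is generated by interleaving the lists in `qs`. -/
inductive InterleaveMany {α : Type u} : List (List α) → List α → Prop
  | nil : InterleaveMany [] []
  | cons {q r p : List α} {qs : List (List α)} :
      Interleave q r p → InterleaveMany qs r → InterleaveMany (q :: qs) p

/-- A pathway is semiformal if its minimal initial state is formal. -/
def Semiformal (fm : σ → Bool) (p : Pathway σ) : Prop := FormalState fm (minInit p)

/-- A formal pathway: a (nonempty) pathway whose minimal initial state and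
final state are both formal. -/
def FormalPathway (fm : σ → Bool) (p : Pathway σ) : Prop :=
  p ≠ [] ∧ FormalState fm (minInit p) ∧ FormalState fm (finalState p)

/-- A formal pathway is decomposable if it can be partitioned into two nonempty
subsequences that are each formal pathways. -/
def FDecomposable (fm : σ → Bool) (p : Pathway σ) : Prop :=
  ∃ q₁ q₂, q₁ ≠ [] ∧ q₂ ≠ [] ∧ Interleave q₁ q₂ p ∧
    FormalPathway fm q₁ ∧ FormalPathway fm q₂

/-- A prime formal pathway is a formal pathway that is not decomposable. -/
def PrimePathway (fm : σ → Bool) (p : Pathway σ) : Prop :=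
  FormalPathway fm p ∧ ¬ FDecomposable fm p

/-- The formal basis: the set of (initial state, final state) pairs of prime
formal pathways of `C`. -/
def formalBasis (fm : σ → Bool) (C : Finset (Reaction σ)) : Set (Reaction σ) :=
  { r | ∃ p, PathwayOf C p ∧ PrimePathway fm p ∧ r = (minInit p, finalState p) }

/-- Two sets of reactions are equal up to addition/removal of trivial reactions. -/
def EqUpToTrivial (A B : Set (Reaction σ)) : Prop :=
  {r ∈ A | ¬ TrivialRxn r} = {r ∈ B | ¬ TrivialRxn r}

/-- The reaction at (0-based) index `j` of `p` is a turning point: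
before it only formal species of the initial state appear, from it on only formal
species of the final state appear, and at the moment the turning point fires,
no formal species are left over. -/
def TurningAt (fm : σ → Bool) (p : Pathway σ) (j : ℕ) : Prop :=
  ∃ h : j < p.length,
    (∀ i ≤ j, formalPart fm (stateAt p i) ≤ minInit p) ∧
    (∀ i, j < i → i ≤ p.length → formalPart fm (stateAt p i) ≤ finalState p) ∧
    formalPart fm (stateAt p j - (p.get ⟨j, h⟩).1) = 0

/-- A regular formal pathway: one that implements a formal reaction,
i.e. has a turning point. -/
def RegularPathway (fm : σ → Bool) (p : Pathway σ) : Prop :=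
  FormalPathway fm p ∧ ∃ j, TurningAt fm p j

/-- A CRN is regular if every prime formal pathway is regular. -/
def RegularCRN (fm : σ → Bool) (C : Finset (Reaction σ)) : Prop :=
  ∀ p, PathwayOf C p → PrimePathway fm p → RegularPathway fm p

/-- `q` is a strong closing pathway for `p` (within CRN `C`): it can occur in the
final state of `p`, consumes no formal species, and leads back to a formal state. -/
def ClosingPathway (fm : σ → Bool) (C : Finset (Reaction σ)) (p q : Pathway σ) : Prop :=
  PathwayOf C q ∧ minInit q ≤ finalState p ∧ (∀ r ∈ q, formalPart fm r.1 = 0) ∧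
  FormalState fm (finalFrom (finalState p) q)

/-- A CRN is strongly tidy if every semiformal pathway has a strong closing pathway. -/
def StronglyTidy (fm : σ → Bool) (C : Finset (Reaction σ)) : Prop :=
  ∀ p, PathwayOf C p → Semiformal fm p → ∃ q, ClosingPathway fm C p q

/-- A semiformal pathway is decomposable if it can be partitioned into two
nonempty subsequences that are each semiformal. -/
def SDecomposable (fm : σ → Bool) (p : Pathway σ) : Prop :=
  ∃ q₁ q₂, q₁ ≠ [] ∧ q₂ ≠ [] ∧ Interleave q₁ q₂ p ∧ Semiformal fm q₁ ∧ Semiformal fm q₂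

/-- The width of a pathway: the maximum size of the states it passes through. -/
def width (p : Pathway σ) : ℕ :=
  ((List.range (p.length + 1)).map (fun i => Multiset.card (stateAt p i))).foldr max 0

/-- The branching factor of a CRN. -/
def branching (C : Finset (Reaction σ)) : ℕ :=
  C.sup (fun r => max (Multiset.card r.1) (Multiset.card r.2))

/-- Formal state `T` is reachable from `S` via reactions of `C`. -/
def Reachable (C : Finset (Reaction σ)) (S T : State σ) : Prop :=
  ∃ p, PathwayOf C p ∧ minInit p ≤ S ∧ finalFrom S p = T

/-- `C` and `C'` share no intermediate species: any species occurring in both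
CRNs is formal. -/
def NoSharedIntermediates (fm : σ → Bool) (C C' : Finset (Reaction σ)) : Prop :=
  ∀ r ∈ C, ∀ r' ∈ C', ∀ x : σ, x ∈ r.1 + r.2 → x ∈ r'.1 + r'.2 → fm x = true

/-- The formal closure of a pathway: the minimal state containing the formal part
of every state along the pathway. -/
def formalClosure (fm : σ → Bool) (p : Pathway σ) : State σ :=
  ((List.range (p.length + 1)).map (fun i => formalPart fm (stateAt p i))).foldr (· ∪ ·) 0

/-- The decomposed final states of a semiformal pathway: all pairs of final
states arising from decompositions into two (nonempty) semiformal pathways. -/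
def DFS (fm : σ → Bool) (p : Pathway σ) : Set (State σ × State σ) :=
  { T | ∃ q₁ q₂, q₁ ≠ [] ∧ q₂ ≠ [] ∧ Interleave q₁ q₂ p ∧
        Semiformal fm q₁ ∧ Semiformal fm q₂ ∧ T = (finalState q₁, finalState q₂) }

/-- The minimal state containing the formal parts of all states strictly after index `j`. -/
def rfsAt (fm : σ → Bool) (p : Pathway σ) (j : ℕ) : State σ :=
  (((List.range (p.length + 1)).filter (fun i => j < i)).map
      (fun i => formalPart fm (stateAt p i))).foldr (· ∪ ·) 0

/-- The regular final states of a pathway: the minimal states `T` witnessed by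
potential turning point reactions. -/
def RFS (fm : σ → Bool) (p : Pathway σ) : Set (State σ) :=
  { T | ∃ j, ∃ h : j < p.length,
      (∀ i ≤ j, formalPart fm (stateAt p i) ≤ minInit p) ∧
      formalPart fm (stateAt p j - (p.get ⟨j, h⟩).1) = 0 ∧
      T = rfsAt fm p j }

/-- The signature of a semiformal pathway: (initial state, final state, width,
formal closure, DFS, RFS). -/
def signature (fm : σ → Bool) (p : Pathway σ) :
    State σ × State σ × ℕ × State σ × Set (State σ × State σ) × Set (State σ) :=
  (minInit p, finalState p, width p, formalClosure fm p, DFS fm p, RFS fm p)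

/-- An annotated prime pathway: exactly its chosen turning point is annotated,
with the corresponding formal basis reaction. -/
def GoodAnnotation (fm : σ → Bool) (ap : List (Reaction σ × Option (Reaction σ))) : Prop :=
  PrimePathway fm (ap.map Prod.fst) ∧
  ∃ j, TurningAt fm (ap.map Prod.fst) j ∧
    ap.map Prod.snd = (List.range ap.length).map
      (fun i => if i = j then
          some (minInit (ap.map Prod.fst), finalState (ap.map Prod.fst)) else none)

/-- `p` can be interpreted as `q`: `q` can occur in the initial state of `p`, has
the same net effect, and there is a decomposition of `p` into prime formal pathways
such that replacing a chosen turning point of each by the corresponding formal basis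
element and removing all other reactions yields `q`. -/
def Interpreted (fm : σ → Bool) (p q : Pathway σ) : Prop :=
  minInit q ≤ minInit p ∧
  finalFrom (minInit p) q = finalState p ∧
  ∃ ap : List (Reaction σ × Option (Reaction σ)),
    ap.map Prod.fst = p ∧ (ap.map Prod.snd).reduceOption = q ∧
    ∃ aps, InterleaveMany aps ap ∧ ∀ a ∈ aps, GoodAnnotation fm a


/-- Sum of reactants of a pathway. -/
def rS (q : Pathway σ) : State σ := (q.map Prod.fst).sum
/-- Sum of products of a pathway. -/
def pS (q : Pathway σ) : State σ := (q.map Prod.snd).sum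

lemma mem_mapSum {f : Reaction σ → Multiset σ} {x : σ} {q : Pathway σ} :
    x ∈ (q.map f).sum ↔ ∃ r ∈ q, x ∈ f r := by
  induction q with
  | nil => simp
  | cons a q ih => simp [ih]

lemma interleave_perm {α : Type u} {q₁ q₂ p : List α} (h : Interleave q₁ q₂ p) :
    p.Perm (q₁ ++ q₂) := by
  induction h with
  | nil => simp
  | left h ih => exact ih.cons _
  | right h ih => exact (ih.cons _).trans List.perm_middle.symm

lemma interleave_swap {α : Type u} {q₁ q₂ p : List α} (h : Interleave q₁ q₂ p) :
    Interleave q₂ q₁ p := by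
  induction h with
  | nil => exact .nil
  | left _ ih => exact .right ih
  | right _ ih => exact .left ih

lemma interleave_filter {α : Type u} (f : α → Bool) (l : List α) :
    Interleave (l.filter f) (l.filter fun a => !f a) l := by
  induction l with
  | nil => exact .nil
  | cons a l ih =>
    by_cases h : f a
    · simpa [List.filter_cons, h] using Interleave.left ih
    · simp only [Bool.not_eq_true] at h
      simpa [List.filter_cons, h] using Interleave.right ih

lemma minInit_le_rS (q : Pathway σ) : minInit q ≤ rS q := by
  induction q with
  | nil => simp [minInit, rS]
  | cons r q ih =>
    simp only [minInit, rS, List.map_cons, List.sum_cons]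
    exact add_le_add_right (le_trans (tsub_le_self) ih) _

lemma rS_interleave {q₁ q₂ p : Pathway σ} (h : Interleave q₁ q₂ p) :
    rS p = rS q₁ + rS q₂ := by
  have := ((interleave_perm h).map Prod.fst).sum_eq
  simpa [rS, List.map_append, List.sum_append] using this

lemma pS_interleave {q₁ q₂ p : Pathway σ} (h : Interleave q₁ q₂ p) :
    pS p = pS q₁ + pS q₂ := by
  have := ((interleave_perm h).map Prod.snd).sum_eq
  simpa [pS, List.map_append, List.sum_append] using this

lemma minInit_le_interleave {q₁ q₂ p : Pathway σ} (h : Interleave q₁ q₂ p) :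
    minInit q₁ ≤ minInit p + pS q₂ := by
  induction h with
  | nil => simp [minInit, pS]
  | @left a q₁ q₂ p h ih =>
    simp only [minInit]
    rw [add_assoc]
    refine add_le_add_right ?_ _
    rw [tsub_le_iff_right]
    calc minInit q₁ ≤ minInit p + pS q₂ := ih
      _ ≤ (minInit p - a.2 + a.2) + pS q₂ := add_le_add_left le_tsub_add _
      _ = minInit p - a.2 + pS q₂ + a.2 := by
          simp [add_comm, add_left_comm, add_assoc]
  | @right a q₁ q₂ p h ih =>
    simp only [minInit, pS, List.map_cons, List.sum_cons]
    calc minInit q₁ ≤ minInit p + pS q₂ := ih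
      _ ≤ (minInit p - a.2 + a.2) + pS q₂ := add_le_add_left le_tsub_add _
      _ ≤ a.1 + ((minInit p - a.2 + a.2) + pS q₂) := le_add_self
      _ = a.1 + (minInit p - a.2) + (a.2 + pS q₂) := by
          simp [add_comm, add_left_comm, add_assoc]

lemma finalFrom_add_rS {p : Pathway σ} : ∀ {S : State σ}, minInit p ≤ S →
    finalFrom S p + rS p = S + pS p := by
  induction p with
  | nil => intro S _; simp [finalFrom, rS, pS]
  | cons r p ih =>
    intro S hS
    simp only [minInit] at hS
    have hr1 : r.1 ≤ S := le_trans (self_le_add_right _ _) hS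
    have h2 : minInit p ≤ S - r.1 + r.2 :=
      le_trans le_tsub_add (add_le_add_left (le_tsub_of_add_le_left hS) _)
    have := ih h2
    simp only [finalFrom, applyRxn, rS, pS, List.map_cons, List.sum_cons]
    calc finalFrom (S - r.1 + r.2) p + (r.1 + rS p)
        = (finalFrom (S - r.1 + r.2) p + rS p) + r.1 := by
          simp [add_comm, add_left_comm, add_assoc]
      _ = (S - r.1 + r.2 + pS p) + r.1 := by rw [this]
      _ = (S - r.1 + r.1) + (r.2 + pS p) := by
          simp [add_comm, add_left_comm, add_assoc]
      _ = S + (r.2 + pS p) := by rw [tsub_add_cancel_of_le hr1]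

lemma finalState_add_rS (p : Pathway σ) : finalState p + rS p = minInit p + pS p :=
  finalFrom_add_rS le_rfl

/-- Key lemma: one half of an interleaving of a formal pathway is itself a formal
pathway, provided its species are disjoint from the other half's, up to formals. -/
lemma sub_formal (fm : σ → Bool) {q₁ q₂ p : Pathway σ}
    (hI : Interleave q₁ q₂ p) (hp : FormalPathway fm p) (hne : q₁ ≠ [])
    (hdis : ∀ x : σ, x ∈ rS q₁ + pS q₁ → x ∈ rS q₂ + pS q₂ → fm x = true) :
    FormalPathway fm q₁ := by
  obtain ⟨_, hmi, hfs⟩ := hp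
  have hnot : ∀ x : σ, fm x = false → x ∈ rS q₁ + pS q₁ →
      Multiset.count x (rS q₂) = 0 ∧ Multiset.count x (pS q₂) = 0 := by
    intro x hx h1
    constructor <;> rw [Multiset.count_eq_zero] <;> intro hmem <;>
      [ exact absurd (hdis x h1 (Multiset.mem_add.mpr (Or.inl hmem))) (by simp [hx]);
        exact absurd (hdis x h1 (Multiset.mem_add.mpr (Or.inr hmem))) (by simp [hx]) ]
  have hmin : FormalState fm (minInit q₁) := by
    intro x hx
    by_contra hfx
    have hfx' : fm x = false := by simpa using hfx
    have h1 : x ∈ rS q₁ + pS q₁ :=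
      Multiset.mem_add.mpr (Or.inl (Multiset.mem_of_le (minInit_le_rS q₁) hx))
    have h2 := (hnot x hfx' h1).2
    have hle := Multiset.count_le_of_le x (minInit_le_interleave hI)
    rw [Multiset.count_add, h2] at hle
    have hmp : Multiset.count x (minInit p) = 0 := by
      rw [Multiset.count_eq_zero]
      intro hmem; exact absurd (hmi x hmem) (by simp [hfx'])
    rw [hmp] at hle
    exact absurd (Multiset.count_eq_zero.mp (Nat.le_zero.mp hle)) (by
      exact fun h => h hx)
  refine ⟨hne, hmin, ?_⟩
  intro x hx
  by_contra hfx
  have hfx' : fm x = false := by simpa using hfx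
  -- x is a species of q₁
  have hxq1 : x ∈ rS q₁ + pS q₁ := by
    have hle : finalState q₁ ≤ minInit q₁ + pS q₁ := by
      calc finalState q₁ ≤ finalState q₁ + rS q₁ := self_le_add_right _ _
        _ = minInit q₁ + pS q₁ := finalState_add_rS q₁
    rcases Multiset.mem_add.mp (Multiset.mem_of_le hle hx) with h | h
    · exact absurd (hmin x h) (by simp [hfx'])
    · exact Multiset.mem_add.mpr (Or.inr h)
  obtain ⟨h2r, h2p⟩ := hnot x hfx' hxq1
  -- count bookkeeping
  have ep := congrArg (Multiset.count x) (finalState_add_rS p)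
  have eq1 := congrArg (Multiset.count x) (finalState_add_rS q₁)
  have hrp := congrArg (Multiset.count x) (rS_interleave hI)
  have hpp := congrArg (Multiset.count x) (pS_interleave hI)
  simp only [Multiset.count_add] at ep eq1 hrp hpp
  have hfp : Multiset.count x (finalState p) = 0 := by
    rw [Multiset.count_eq_zero]; intro hmem; exact absurd (hfs x hmem) (by simp [hfx'])
  have hmp : Multiset.count x (minInit p) = 0 := by
    rw [Multiset.count_eq_zero]; intro hmem; exact absurd (hmi x hmem) (by simp [hfx'])
  have hmq : Multiset.count x (minInit q₁) = 0 := by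
    rw [Multiset.count_eq_zero]; intro hmem; exact absurd (hmin x hmem) (by simp [hfx'])
  have hzero : Multiset.count x (finalState q₁) = 0 := by omega
  exact absurd (Multiset.count_eq_zero.mp hzero) (fun h => h hx)

/-- The union of two regular CRNs sharing no intermediate species is regular;
moreover every prime formal pathway of the union lies entirely in one of the two CRNs. -/
theorem union_regular {σ : Type} [DecidableEq σ] (fm : σ → Bool)
    (C C' : Finset (Reaction σ))
    (hC : NontrivialRxns C) (hC' : NontrivialRxns C')
    (hdisj : NoSharedIntermediates fm C C')
    (hr : RegularCRN fm C) (hr' : RegularCRN fm C') :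
    RegularCRN fm (C ∪ C') ∧
    ∀ p, PathwayOf (C ∪ C') p → PrimePathway fm p →
      (PathwayOf C p ∨ PathwayOf C' p) := by
  have key : ∀ p, PathwayOf (C ∪ C') p → PrimePathway fm p →
      (PathwayOf C p ∨ PathwayOf C' p) := by
    intro p hp hprime
    set q₁ : Pathway σ := p.filter (fun r => decide (r ∈ C)) with hq1def
    set q₂ : Pathway σ := p.filter (fun r => !decide (r ∈ C)) with hq2def
    have hI : Interleave q₁ q₂ p := interleave_filter _ p
    have hperm : p.Perm (q₁ ++ q₂) := interleave_perm hI
    have hq1C : ∀ r ∈ q₁, r ∈ C := by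
      intro r hrm
      have := List.of_mem_filter hrm
      simpa using this
    have hq2C' : ∀ r ∈ q₂, r ∈ C' := by
      intro r hrm
      have h1 := List.of_mem_filter hrm
      have h2 : r ∈ p := List.mem_of_mem_filter hrm
      have := hp r h2
      rw [Finset.mem_union] at this
      simp only [Bool.not_eq_true', decide_eq_false_iff_not] at h1
      tauto
    have hspec1 : ∀ x : σ, x ∈ rS q₁ + pS q₁ → ∃ r ∈ C, x ∈ r.1 + r.2 := by
      intro x hx
      rcases Multiset.mem_add.mp hx with h | h
      · obtain ⟨r, hr, hxr⟩ := mem_mapSum.mp h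
        exact ⟨r, hq1C r hr, Multiset.mem_add.mpr (Or.inl hxr)⟩
      · obtain ⟨r, hr, hxr⟩ := mem_mapSum.mp h
        exact ⟨r, hq1C r hr, Multiset.mem_add.mpr (Or.inr hxr)⟩
    have hspec2 : ∀ x : σ, x ∈ rS q₂ + pS q₂ → ∃ r ∈ C', x ∈ r.1 + r.2 := by
      intro x hx
      rcases Multiset.mem_add.mp hx with h | h
      · obtain ⟨r, hr, hxr⟩ := mem_mapSum.mp h
        exact ⟨r, hq2C' r hr, Multiset.mem_add.mpr (Or.inl hxr)⟩
      · obtain ⟨r, hr, hxr⟩ := mem_mapSum.mp h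
        exact ⟨r, hq2C' r hr, Multiset.mem_add.mpr (Or.inr hxr)⟩
    have hdis : ∀ x : σ, x ∈ rS q₁ + pS q₁ → x ∈ rS q₂ + pS q₂ → fm x = true := by
      intro x h1 h2
      obtain ⟨r, hr, hxr⟩ := hspec1 x h1
      obtain ⟨r', hr', hxr'⟩ := hspec2 x h2
      exact hdisj r hr r' hr' x hxr hxr'
    by_cases h1 : q₁ = []
    · right
      intro r hrm
      have : r ∈ q₁ ++ q₂ := hperm.mem_iff.mp hrm
      rw [h1] at this
      exact hq2C' r (by simpa using this)
    by_cases h2 : q₂ = []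
    · left
      intro r hrm
      have : r ∈ q₁ ++ q₂ := hperm.mem_iff.mp hrm
      rw [h2] at this
      exact hq1C r (by simpa using this)
    · exfalso
      apply hprime.2
      exact ⟨q₁, q₂, h1, h2, hI, sub_formal fm hI hprime.1 h1 hdis,
        sub_formal fm (interleave_swap hI) hprime.1 h2 (fun x hx hx' => hdis x hx' hx)⟩
  refine ⟨?_, key⟩
  intro p hp hprime
  rcases key p hp hprime with h | h
  · exact hr p h hprime
  · exact hr' p h hprime

end CRNVerif
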